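/- For any positive integers N and k, ∑_{1≤m<N} ((-1)^{m-1}/m^k)·binom(N-1,m) = ∑_{0<m_1≤⋯≤m_k<N} 1/(m_1⋯m_k). (Hoffman's duality for the depth-one index (k): H_{<N}(k) = ζ^⋆_{<N}(1,…,1) with k ones.) -/

import Mathlib

/-- Auxiliary recursion: `zetaStarAux M t` sums over `0 < m₁ ≤ ⋯ ≤ m_r < M` where the
exponent list `t` lists the exponents from the *largest* variable downwards. -/
def zetaStarAux : ℕ → List ℕ → ℚ
  | _, [] => 1
  | M, k :: t => ∑ m ∈ Finset.Ioo 0 M, (1 / (m : ℚ) ^ k) * zetaStarAux (m + 1) t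

/-- The multiple star harmonic sum `ζ⋆_{<N}(k₁,…,k_r) = ∑_{0<m₁≤⋯≤m_r<N} ∏ᵢ 1/mᵢ^{kᵢ}`. -/
def zetaStar (N : ℕ) (ks : List ℕ) : ℚ := zetaStarAux N ks.reverse

open Finset

/-- The alternating binomial sum. -/
noncomputable def S (n k : ℕ) : ℚ :=
  ∑ m ∈ Finset.Ioo 0 (n + 1), ((-1 : ℚ) ^ (m - 1) / (m : ℚ) ^ k) * ((n.choose m : ℕ) : ℚ)

lemma S_zero {n : ℕ} (hn : 0 < n) : S n 0 = 1 := by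
  have h := Int.alternating_sum_range_choose_of_ne (n := n) hn.ne'
  have hq : ∑ i ∈ range (n + 1), ((-1 : ℚ)) ^ i * (n.choose i : ℚ) = 0 := by
    have := congrArg (fun z : ℤ => (z : ℚ)) h
    push_cast at this
    simpa using this
  have hsplit : ∑ i ∈ range (n + 1), ((-1 : ℚ)) ^ i * (n.choose i : ℚ) =
      1 + ∑ m ∈ Ioo 0 (n + 1), ((-1 : ℚ)) ^ m * (n.choose m : ℚ) := by
    have hins : range (n + 1) = insert 0 (Ioo 0 (n + 1)) := by
      ext x; simp only [Finset.mem_range, Finset.mem_insert, Finset.mem_Ioo]; omega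
    rw [hins, Finset.sum_insert (by simp)]
    simp
  have key : ∑ m ∈ Ioo 0 (n + 1), ((-1 : ℚ)) ^ m * (n.choose m : ℚ) = -1 := by
    linarith [hq, hsplit]
  unfold S
  have : ∀ m ∈ Ioo 0 (n+1), ((-1 : ℚ) ^ (m - 1) / (m : ℚ) ^ 0) * ((n.choose m : ℕ) : ℚ)
      = -(((-1 : ℚ)) ^ m * (n.choose m : ℚ)) := by
    intro m hm
    have hm1 : 1 ≤ m := (Finset.mem_Ioo.mp hm).1
    have : ((-1 : ℚ)) ^ m = (-1 : ℚ) ^ (m - 1) * (-1) := by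
      rw [← pow_succ]; congr 1; omega
    rw [this]; ring
  rw [Finset.sum_congr rfl this, Finset.sum_neg_distrib, key]
  norm_num

lemma S_rec (n k : ℕ) : S n (k + 1) = ∑ j ∈ Ioo 0 (n + 1), (1 / (j : ℚ)) * S j k := by
  have hIoo : ∀ a : ℕ, Ioo 0 (a + 1) = Ico 1 (a + 1) := by
    intro a; ext x; simp [Nat.lt_iff_add_one_le]
  unfold S
  rw [hIoo n]
  have hrhs : ∀ j ∈ Ico 1 (n+1), (1 / (j : ℚ)) *
      (∑ m ∈ Ioo 0 (j + 1), ((-1 : ℚ) ^ (m - 1) / (m : ℚ) ^ k) * ((j.choose m : ℕ) : ℚ))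
      = ∑ m ∈ Ico 1 (j+1),
        (1 / (j : ℚ)) * (((-1 : ℚ) ^ (m - 1) / (m : ℚ) ^ k) * ((j.choose m : ℕ) : ℚ)) := by
    intro j _; rw [hIoo j, Finset.mul_sum]
  rw [Finset.sum_congr rfl hrhs]
  rw [show (∑ j ∈ Ico 1 (n+1), ∑ m ∈ Ico 1 (j+1),
        (1 / (j : ℚ)) * (((-1 : ℚ) ^ (m - 1) / (m : ℚ) ^ k) * ((j.choose m : ℕ) : ℚ)))
      = ∑ m ∈ Ico 1 (n+1), ∑ j ∈ Ico m (n+1),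
        (1 / (j : ℚ)) * (((-1 : ℚ) ^ (m - 1) / (m : ℚ) ^ k) * ((j.choose m : ℕ) : ℚ)) from
      (Finset.sum_Ico_Ico_comm 1 (n+1) _).symm]
  refine Finset.sum_congr rfl fun m hm => ?_
  have hm1 : 1 ≤ m := (Finset.mem_Ico.mp hm).1
  have step : ∀ j ∈ Ico m (n+1),
      (1 / (j : ℚ)) * (((-1 : ℚ) ^ (m - 1) / (m : ℚ) ^ k) * ((j.choose m : ℕ) : ℚ))
      = ((-1 : ℚ) ^ (m - 1) / (m : ℚ) ^ (k+1)) * (((j-1).choose (m-1) : ℕ) : ℚ) := by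
    intro j hj
    have hj1 : 1 ≤ j := le_trans hm1 (Finset.mem_Ico.mp hj).1
    have hkey : (j : ℚ) * (((j-1).choose (m-1) : ℕ) : ℚ) = ((j.choose m : ℕ) : ℚ) * m := by
      have := Nat.add_one_mul_choose_eq (j - 1) (m - 1)
      rw [show j - 1 + 1 = j by omega, show m - 1 + 1 = m by omega] at this
      exact_mod_cast congrArg (fun x : ℕ => (x : ℚ)) this
    have hjne : (j : ℚ) ≠ 0 := Nat.cast_ne_zero.mpr (by omega)
    have hmne : (m : ℚ) ≠ 0 := Nat.cast_ne_zero.mpr (by omega)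
    field_simp
    linear_combination (-(m : ℚ) ^ k) * hkey
  rw [Finset.sum_congr rfl step, ← Finset.mul_sum]
  have hhs : ∑ j ∈ Ico m (n+1), (((j-1).choose (m-1) : ℕ) : ℚ) = ((n.choose m : ℕ) : ℚ) := by
    have hnat : ∑ j ∈ Ico m (n+1), (j-1).choose (m-1) = n.choose m := by
      rcases le_or_gt m n with h | h
      · have h1 : Ico m (n+1) = Icc m n := by rw [Finset.Ico_add_one_right_eq_Icc]
        have h2 : (Icc (m-1) (n-1)).map (addRightEmbedding 1) = Icc m n := by
          rw [Finset.map_add_right_Icc]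
          congr 1 <;> omega
        rw [h1, ← h2, Finset.sum_map]
        have h3 : ∀ i ∈ Icc (m-1) (n-1),
            ((addRightEmbedding 1) i - 1).choose (m-1) = i.choose (m-1) := by
          intro i _; simp [addRightEmbedding]
        rw [Finset.sum_congr rfl h3, Nat.sum_Icc_choose]
        congr 1 <;> omega
      · have he : Ico m (n+1) = ∅ := by
          rw [Finset.Ico_eq_empty_iff]; omega
        rw [he, Nat.choose_eq_zero_of_lt h]
        simp
    exact_mod_cast congrArg (fun x : ℕ => (x : ℚ)) hnat
  rw [hhs]

lemma S_eq_zetaStarAux (k : ℕ) : ∀ n : ℕ, S n (k + 1) = zetaStarAux (n + 1) (List.replicate (k + 1) 1) := by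
  induction k with
  | zero =>
    intro n
    rw [S_rec, List.replicate_succ, zetaStarAux]
    refine Finset.sum_congr rfl fun j hj => ?_
    have hj1 : 0 < j := (Finset.mem_Ioo.mp hj).1
    rw [S_zero hj1, List.replicate_zero, zetaStarAux]
    norm_num
  | succ k ih =>
    intro n
    rw [S_rec, List.replicate_succ, zetaStarAux]
    refine Finset.sum_congr rfl fun j hj => ?_
    have hj1 : 0 < j := (Finset.mem_Ioo.mp hj).1
    rw [ih j]
    norm_num


/-- Hoffman's duality for the depth-one index `(k)`:
`∑_{1≤m<N} ((-1)^{m-1}/m^k)·binom(N-1,m) = ∑_{0<m₁≤⋯≤m_k<N} 1/(m₁⋯m_k)`. -/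
theorem hoffman_duality_depth_one (N k : ℕ) (hN : 0 < N) (hk : 0 < k) :
    ∑ m ∈ Finset.Ioo 0 N, ((-1 : ℚ) ^ (m - 1) / (m : ℚ) ^ k) * ((N - 1).choose m : ℚ) =
      zetaStar N (List.replicate k 1) := by
  obtain ⟨n, rfl⟩ : ∃ n, N = n + 1 := ⟨N - 1, by omega⟩
  obtain ⟨k', rfl⟩ : ∃ k', k = k' + 1 := ⟨k - 1, by omega⟩
  unfold zetaStar
  rw [List.reverse_replicate]
  have := S_eq_zetaStarAux k' n
  unfold S at this
  simpa using this
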